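/- Let Φ_D be a quantum m-stochastic channel with m ≥ 3, σ^(0) = α·ρ_* + (1−α)·ρ^(0) a density matrix with α ∈ (0,1], and σ^(n+1) = Φ_D[σ^(n) ⊗ ⋯ ⊗ σ^(n)]. Then σ^(n) converges to the maximally mixed state ρ_* = I/N in Hilbert–Schmidt norm as n → ∞. -/

import Mathlib

open Matrix ComplexOrder

/-- The action of a multipartite matrix `D` on `(ℂ^N)^{⊗m}` as a multilinear map:
the output lives in slot `t`, the matrix `ρ s` is fed (via `I ⊗ ρ₁^⊤ ⊗ ⋯`) into each
input slot `s ≠ t`, and all input slots are traced out.  In components,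
`(Φ ρ)_{a b} = Σ_{k l : Fin m → Fin N, k t = a, l t = b} D_{k l} Π_{s ≠ t} (ρ s)_{k s, l s}`. -/
noncomputable def qAct {N m : ℕ} (D : Matrix (Fin m → Fin N) (Fin m → Fin N) ℂ)
    (t : Fin m) (ρ : Fin m → Matrix (Fin N) (Fin N) ℂ) : Matrix (Fin N) (Fin N) ℂ :=
  Matrix.of fun a b => ∑ k : Fin m → Fin N, ∑ l : Fin m → Fin N,
    if k t = a ∧ l t = b then D k l * ∏ s ∈ Finset.univ.erase t, ρ s (k s) (l s) else 0

/-- A density matrix: positive semidefinite with unit trace. -/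
def IsDensity {N : ℕ} (ρ : Matrix (Fin N) (Fin N) ℂ) : Prop :=
  ρ.PosSemidef ∧ ρ.trace = 1

/-- A quantum `m`-stochastic channel: the dynamical matrix `D` is positive semidefinite,
and for every choice of output slot `t`, feeding density matrices into the remaining
slots yields a trace-preserving (hence, with `D ≥ 0`, completely positive) map. -/
def QMStochastic {N m : ℕ} (D : Matrix (Fin m → Fin N) (Fin m → Fin N) ℂ) : Prop :=
  D.PosSemidef ∧
    ∀ (t : Fin m) (ρ : Fin m → Matrix (Fin N) (Fin N) ℂ),
      (∀ s : Fin m, s ≠ t → IsDensity (ρ s)) → (qAct D t ρ).trace = 1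

variable {N m : ℕ}

lemma qAct_apply (D : Matrix (Fin m → Fin N) (Fin m → Fin N) ℂ) (t : Fin m)
    (ρ : Fin m → Matrix (Fin N) (Fin N) ℂ) (a b : Fin N) :
    qAct D t ρ a b = ∑ k : Fin m → Fin N, ∑ l : Fin m → Fin N,
      if k t = a ∧ l t = b then D k l * ∏ s ∈ Finset.univ.erase t, ρ s (k s) (l s) else 0 := rfl

lemma qAct_erase (D : Matrix (Fin m → Fin N) (Fin m → Fin N) ℂ) {t s0 : Fin m}
    (hs0 : s0 ≠ t) (ρ : Fin m → Matrix (Fin N) (Fin N) ℂ) (a b : Fin N) :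
    qAct D t ρ a b = ∑ k : Fin m → Fin N, ∑ l : Fin m → Fin N,
      if k t = a ∧ l t = b then
        D k l * (ρ s0 (k s0) (l s0) *
          ∏ s ∈ (Finset.univ.erase t).erase s0, ρ s (k s) (l s)) else 0 := by
  rw [qAct_apply]
  refine Finset.sum_congr rfl fun k _ => Finset.sum_congr rfl fun l _ => ?_
  rw [← Finset.mul_prod_erase (Finset.univ.erase t) (fun s => ρ s (k s) (l s))
    (Finset.mem_erase.2 ⟨hs0, Finset.mem_univ _⟩)]

lemma qAct_update_of_ne (D : Matrix (Fin m → Fin N) (Fin m → Fin N) ℂ) {t s0 : Fin m}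
    (hs0 : s0 ≠ t) (ρ : Fin m → Matrix (Fin N) (Fin N) ℂ) (X : Matrix (Fin N) (Fin N) ℂ)
    (a b : Fin N) :
    qAct D t (Function.update ρ s0 X) a b = ∑ k : Fin m → Fin N, ∑ l : Fin m → Fin N,
      if k t = a ∧ l t = b then
        D k l * (X (k s0) (l s0) *
          ∏ s ∈ (Finset.univ.erase t).erase s0, ρ s (k s) (l s)) else 0 := by
  rw [qAct_erase D hs0]
  refine Finset.sum_congr rfl fun k _ => Finset.sum_congr rfl fun l _ => ?_
  have h2 : ∏ s ∈ (Finset.univ.erase t).erase s0,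
      Function.update ρ s0 X s (k s) (l s) =
      ∏ s ∈ (Finset.univ.erase t).erase s0, ρ s (k s) (l s) :=
    Finset.prod_congr rfl fun s hs => by
      rw [Function.update_of_ne (Finset.mem_erase.1 hs).1]
  rw [Function.update_self, h2]

lemma qAct_update_add (D : Matrix (Fin m → Fin N) (Fin m → Fin N) ℂ) {t s0 : Fin m}
    (hs0 : s0 ≠ t) (ρ : Fin m → Matrix (Fin N) (Fin N) ℂ) (X Y : Matrix (Fin N) (Fin N) ℂ) :
    qAct D t (Function.update ρ s0 (X + Y)) =
      qAct D t (Function.update ρ s0 X) + qAct D t (Function.update ρ s0 Y) := by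
  ext a b
  simp only [Matrix.add_apply, qAct_update_of_ne D hs0, ← Finset.sum_add_distrib]
  refine Finset.sum_congr rfl fun k _ => Finset.sum_congr rfl fun l _ => ?_
  split_ifs with h
  · ring
  · rw [add_zero]

lemma qAct_update_smul (D : Matrix (Fin m → Fin N) (Fin m → Fin N) ℂ) {t s0 : Fin m}
    (hs0 : s0 ≠ t) (ρ : Fin m → Matrix (Fin N) (Fin N) ℂ) (c : ℂ) (X : Matrix (Fin N) (Fin N) ℂ) :
    qAct D t (Function.update ρ s0 (c • X)) = c • qAct D t (Function.update ρ s0 X) := by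
  ext a b
  simp only [Matrix.smul_apply, qAct_update_of_ne D hs0, smul_eq_mul, Finset.mul_sum]
  refine Finset.sum_congr rfl fun k _ => Finset.sum_congr rfl fun l _ => ?_
  split_ifs with h
  · ring
  · rw [mul_zero]

lemma isDensity_scaled_outer (c : ℝ) (hc : 0 ≤ c) (v : Fin N → ℂ)
    (hv : (c : ℂ) * ∑ i, v i * star (v i) = 1) :
    IsDensity ((c : ℂ) • Matrix.of (fun a b => v a * star (v b))) := by
  constructor
  · refine Matrix.PosSemidef.of_dotProduct_mulVec_nonneg ?_ ?_
    · ext a b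
      simp only [Matrix.conjTranspose_apply, Matrix.smul_apply, Matrix.of_apply, smul_eq_mul,
        star_mul', star_star]
      rw [Complex.star_def, Complex.conj_ofReal]
      ring
    · intro x
      have key : star x ⬝ᵥ ((c : ℂ) • Matrix.of (fun a b => v a * star (v b))) *ᵥ x =
          (c : ℂ) * ((∑ i, star (x i) * v i) * star (∑ i, star (x i) * v i)) := by
        simp only [dotProduct, Matrix.mulVec, Matrix.smul_apply, Matrix.of_apply,
          Pi.star_apply, smul_eq_mul, Finset.mul_sum, Finset.sum_mul, star_sum, star_mul',
          star_star]
        rw [Finset.sum_comm]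
        refine Finset.sum_congr rfl fun i _ => Finset.sum_congr rfl fun j _ => ?_
        ring
      rw [key]
      exact mul_nonneg (by exact_mod_cast Complex.zero_le_real.2 hc)
        (mul_star_self_nonneg _)
  · have : ((c : ℂ) • Matrix.of (fun a b => v a * star (v b))).trace
        = (c : ℂ) * ∑ i, v i * star (v i) := by
      simp [Matrix.trace, Matrix.diag, Finset.mul_sum, mul_comm]
    rw [this, hv]

lemma combo_entry {ι : Type*} [DecidableEq ι] {a b : ι} (hab : a ≠ b) (i j : ι) :
    (((1/2 : ℝ)):ℂ) * (((if i = a then (1:ℂ) else 0) + (if i = b then 1 else 0)) *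
        star ((if j = a then (1:ℂ) else 0) + (if j = b then 1 else 0)))
      + Complex.I * ((((1/2 : ℝ)):ℂ) *
        (((if i = a then (1:ℂ) else 0) + (if i = b then Complex.I else 0)) *
        star ((if j = a then (1:ℂ) else 0) + (if j = b then Complex.I else 0))))
      + (-((1+Complex.I)/2)) * (if a = i ∧ a = j then 1 else 0)
      + (-((1+Complex.I)/2)) * (if b = i ∧ b = j then 1 else 0)
      = (if a = i ∧ b = j then 1 else 0) := by
  by_cases hi : i = a <;> by_cases hi' : i = b <;> by_cases hj : j = a <;> by_cases hj' : j = b <;>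
    simp_all [eq_comm, Complex.conj_I] <;> ring_nf <;>
    simp [Complex.I_sq] <;> ring_nf <;> norm_num [Complex.ext_iff]

/-- A linear functional which is constant on densities equals that constant times the trace. -/
lemma linear_eq_trace (hN : 0 < N) (g : Matrix (Fin N) (Fin N) ℂ →ₗ[ℂ] ℂ) (c : ℂ)
    (hg : ∀ ρ, IsDensity ρ → g ρ = c) (A : Matrix (Fin N) (Fin N) ℂ) :
    g A = c * A.trace := by
  classical
  have hP : ∀ a : Fin N, IsDensity (Matrix.of (fun i j =>
      (if i = a then (1:ℂ) else 0) * star (if j = a then (1:ℂ) else 0))) := by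
    intro a
    have hd := isDensity_scaled_outer (N := N) 1 zero_le_one
      (fun i => if i = a then (1:ℂ) else 0) (by simp [Finset.sum_ite_eq'])
    simpa using hd
  have hPE : ∀ a : Fin N, Matrix.of (fun i j =>
      (if i = a then (1:ℂ) else 0) * star (if j = a then (1:ℂ) else 0)) =
      Matrix.single a a 1 := by
    intro a
    ext i j
    simp only [Matrix.of_apply, Matrix.single]
    by_cases hi : a = i
    · subst hi
      by_cases hj : a = j
      · subst hj; simp
      · simp [hj, Ne.symm hj]
    · by_cases hj : a = j
      · subst hj; simp [hi, Ne.symm hi]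
      · simp [hi, hj, Ne.symm hi, Ne.symm hj]
  have hE : ∀ a b : Fin N, g (Matrix.single a b 1) = if a = b then c else 0 := by
    intro a b
    by_cases hab : a = b
    · subst hab
      rw [if_pos rfl, ← hPE a]
      exact hg _ (hP a)
    · rw [if_neg hab]
      set u : Fin N → ℂ := fun i => (if i = a then 1 else 0) + (if i = b then 1 else 0) with hu
      set w : Fin N → ℂ := fun i =>
        (if i = a then 1 else 0) + (if i = b then Complex.I else 0) with hw
      have husq : ∀ i, u i * star (u i) =
          (if i = a then 1 else 0) + (if i = b then 1 else 0) := by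
        intro i
        by_cases hi : i = a
        · subst hi; simp [hu, hab]
        · by_cases hj : i = b
          · subst hj; simp [hu, hi]
          · simp [hu, hi, hj]
      have hwsq : ∀ i, w i * star (w i) =
          (if i = a then 1 else 0) + (if i = b then 1 else 0) := by
        intro i
        by_cases hi : i = a
        · subst hi; simp [hw, hab]
        · by_cases hj : i = b
          · subst hj; simp [hw, hi, Complex.mul_conj]
          · simp [hw, hi, hj]
      have hsum1 : ∀ f : Fin N → ℂ,
          (∀ i, f i = (if i = a then 1 else 0) + (if i = b then 1 else 0)) →
          ((1/2 : ℝ) : ℂ) * ∑ i, f i = 1 := by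
        intro f hf
        rw [Finset.sum_congr rfl fun i _ => hf i, Finset.sum_add_distrib]
        simp only [Finset.sum_ite_eq' Finset.univ, Finset.mem_univ, if_pos]
        norm_num
      have hXd : IsDensity (((1/2 : ℝ) : ℂ) • Matrix.of (fun i j => u i * star (u j))) :=
        isDensity_scaled_outer (1/2) (by norm_num) _ (hsum1 _ husq)
      have hYd : IsDensity (((1/2 : ℝ) : ℂ) • Matrix.of (fun i j => w i * star (w j))) :=
        isDensity_scaled_outer (1/2) (by norm_num) _ (hsum1 _ hwsq)
      have hmat : Matrix.single a b (1:ℂ) =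
          (((1/2 : ℝ) : ℂ) • Matrix.of (fun i j => u i * star (u j))) +
          Complex.I • (((1/2 : ℝ) : ℂ) • Matrix.of (fun i j => w i * star (w j))) +
          (-((1+Complex.I)/2)) • Matrix.single a a 1 +
          (-((1+Complex.I)/2)) • Matrix.single b b 1 := by
        ext i j
        simp only [Matrix.add_apply, Matrix.smul_apply, Matrix.of_apply, smul_eq_mul,
          Matrix.single, hu, hw]
        exact (combo_entry hab i j).symm
      rw [hmat, map_add, map_add, map_add, hg _ hXd, _root_.map_smul, hg _ hYd,
        _root_.map_smul, _root_.map_smul, ← hPE a, ← hPE b, hg _ (hP a), hg _ (hP b)]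
      simp only [smul_eq_mul]
      ring
  have hA := Matrix.matrix_eq_sum_single A
  have h1 : g A = ∑ i, ∑ j, g (Matrix.single i j (A i j)) := by
    conv_lhs => rw [hA]
    rw [map_sum]
    exact Finset.sum_congr rfl fun i _ => map_sum g _ _
  have h2 : ∀ i j, g (Matrix.single i j (A i j)) =
      A i j * g (Matrix.single i j 1) := by
    intro i j
    have : Matrix.single i j (A i j) = A i j • Matrix.single i j 1 := by
      ext i' j'
      simp only [Matrix.smul_apply, Matrix.single, Matrix.of_apply, smul_eq_mul]
      split_ifs <;> simp
    rw [this, _root_.map_smul, smul_eq_mul]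
  have h3 : ∀ i : Fin N, ∑ j, A i j * g (Matrix.single i j 1) = A i i * c := by
    intro i
    rw [Finset.sum_eq_single i]
    · rw [hE, if_pos rfl]
    · intro j _ hj
      rw [hE, if_neg (fun h => hj h.symm), mul_zero]
    · intro h; exact absurd (Finset.mem_univ i) h
  rw [h1, Finset.sum_congr rfl fun i _ => Finset.sum_congr rfl fun j _ => h2 i j,
    Finset.sum_congr rfl fun i _ => h3 i]
  simp [Matrix.trace, Matrix.diag, Finset.mul_sum, mul_comm]

/-- slot-wise linear map given by qAct at slot `s0`. -/
noncomputable def qActTraceLM (D : Matrix (Fin m → Fin N) (Fin m → Fin N) ℂ) {t s0 : Fin m}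
    (hs0 : s0 ≠ t) (ρ : Fin m → Matrix (Fin N) (Fin N) ℂ) :
    Matrix (Fin N) (Fin N) ℂ →ₗ[ℂ] ℂ where
  toFun X := (qAct D t (Function.update ρ s0 X)).trace
  map_add' X Y := by
    show (qAct D t (Function.update ρ s0 (X + Y))).trace = _
    rw [qAct_update_add D hs0, Matrix.trace_add]
  map_smul' c X := by
    show (qAct D t (Function.update ρ s0 (c • X))).trace = _
    rw [qAct_update_smul D hs0, Matrix.trace_smul]; rfl

lemma trace_qAct (hN : 0 < N) {D : Matrix (Fin m → Fin N) (Fin m → Fin N) ℂ}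
    (hD : QMStochastic D) (t : Fin m) (ρ : Fin m → Matrix (Fin N) (Fin N) ℂ) :
    (qAct D t ρ).trace = ∏ s ∈ Finset.univ.erase t, (ρ s).trace := by
  classical
  suffices H : ∀ (S : Finset (Fin m)) (ρ : Fin m → Matrix (Fin N) (Fin N) ℂ),
      (∀ s, s ≠ t → s ∉ S → IsDensity (ρ s)) →
      (qAct D t ρ).trace = ∏ s ∈ Finset.univ.erase t, (ρ s).trace by
    exact H Finset.univ ρ (fun s _ hs => absurd (Finset.mem_univ s) hs)
  intro S
  induction S using Finset.induction_on with
  | empty =>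
    intro ρ h
    rw [hD.2 t ρ (fun s hs => h s hs (Finset.notMem_empty s))]
    symm
    exact Finset.prod_eq_one fun s hs => (h _ (Finset.mem_erase.1 hs).1 (Finset.notMem_empty s)).2
  | @insert a S ha ih =>
    intro ρ h
    by_cases hat : a = t
    · exact ih ρ (fun s hs hsS => h s hs (by
        subst hat
        intro hmem
        rcases Finset.mem_insert.1 hmem with h1 | h1
        · exact hs h1
        · exact hsS h1))
    · set c : ℂ := ∏ s ∈ (Finset.univ.erase t).erase a, (ρ s).trace with hc
      have hprod : ∀ X : Matrix (Fin N) (Fin N) ℂ,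
          ∏ s ∈ Finset.univ.erase t, ((Function.update ρ a X) s).trace = X.trace * c := by
        intro X
        rw [← Finset.mul_prod_erase (Finset.univ.erase t) _
          (Finset.mem_erase.2 ⟨hat, Finset.mem_univ _⟩), Function.update_self]
        congr 1
        exact Finset.prod_congr rfl fun s hs => by
          rw [Function.update_of_ne (Finset.mem_erase.1 hs).1]
      have hgd : ∀ X, IsDensity X → qActTraceLM D hat ρ X = c := by
        intro X hX
        have hins := ih (Function.update ρ a X) (fun s hs hsS => by
          by_cases hsa : s = a
          · subst hsa; rw [Function.update_self]; exact hX
          · rw [Function.update_of_ne hsa]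
            exact h s hs (fun hmem => by
              rcases Finset.mem_insert.1 hmem with h1 | h1
              · exact hsa h1
              · exact hsS h1))
        show (qAct D t (Function.update ρ a X)).trace = c
        rw [hins, hprod, hX.2, one_mul]
      have hlin := linear_eq_trace hN (qActTraceLM D hat ρ) c hgd (ρ a)
      have : qActTraceLM D hat ρ (ρ a) = (qAct D t ρ).trace := by
        show (qAct D t (Function.update ρ a (ρ a))).trace = _
        rw [Function.update_eq_self]
      rw [this] at hlin
      rw [hlin, hc, mul_comm]
      exact Finset.mul_prod_erase (Finset.univ.erase t) (fun s => (ρ s).trace)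
        (Finset.mem_erase.2 ⟨hat, Finset.mem_univ _⟩)

lemma qAct_unit_slot (hN : 0 < N) {D : Matrix (Fin m → Fin N) (Fin m → Fin N) ℂ}
    (hD : QMStochastic D) {t s0 : Fin m} (hs0 : s0 ≠ t)
    (ρ : Fin m → Matrix (Fin N) (Fin N) ℂ) (hρs0 : ρ s0 = (N : ℂ)⁻¹ • 1)
    (htr : ∀ s, s ≠ t → s ≠ s0 → (ρ s).trace = 1) :
    qAct D t ρ = (N : ℂ)⁻¹ • (1 : Matrix (Fin N) (Fin N) ℂ) := by
  classical
  ext a b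
  set ρ' : Fin m → Matrix (Fin N) (Fin N) ℂ :=
    Function.update ρ t (Matrix.single a b 1) with hρ'
  have hinner : ∀ (X : ℂ) (p q : Fin N),
        (∑ c : Fin N, if p = c ∧ q = c then X else 0) = if p = q then X else 0 := by
      intro X p q
      rw [Finset.sum_eq_single p]
      · by_cases h : p = q <;> simp [h, eq_comm]
      · intro c _ hc
        rw [if_neg]
        rintro ⟨h1, _⟩
        exact hc h1.symm
      · intro h; exact absurd (Finset.mem_univ p) h
  -- Step A: the trace of the channel with output slot s0
  have hstep_a : (qAct D s0 ρ').trace = if a = b then (1:ℂ) else 0 := by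
    rw [trace_qAct hN hD s0 ρ']
    have ht_mem : t ∈ Finset.univ.erase s0 :=
      Finset.mem_erase.2 ⟨Ne.symm hs0, Finset.mem_univ _⟩
    rw [← Finset.mul_prod_erase (Finset.univ.erase s0) (fun s => (ρ' s).trace) ht_mem]
    have h1 : (ρ' t).trace = if a = b then (1:ℂ) else 0 := by
      rw [hρ', Function.update_self, Matrix.trace]
      simp only [Matrix.diag_apply, Matrix.single, Matrix.of_apply]
      exact hinner 1 a b
    have h2 : ∏ s ∈ (Finset.univ.erase s0).erase t, (ρ' s).trace = 1 := by
      refine Finset.prod_eq_one fun s hs => ?_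
      obtain ⟨hst, hss0mem⟩ := Finset.mem_erase.1 hs
      obtain ⟨hss0, _⟩ := Finset.mem_erase.1 hss0mem
      rw [hρ', Function.update_of_ne hst]
      exact htr s hst hss0
    rw [h1, h2, mul_one]
  -- Step B: entry of qAct D t ρ in terms of that trace
  have hstep_b : qAct D t ρ a b = (N : ℂ)⁻¹ * (qAct D s0 ρ').trace := by
    -- expand the trace
    have htr_expand : (qAct D s0 ρ').trace =
        ∑ k : Fin m → Fin N, ∑ l : Fin m → Fin N,
          if k s0 = l s0 then
            D k l * ((if a = k t ∧ b = l t then (1:ℂ) else 0) *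
              ∏ s ∈ (Finset.univ.erase s0).erase t, ρ s (k s) (l s)) else 0 := by
      rw [Matrix.trace]
      have : ∀ c : Fin N, (qAct D s0 ρ').diag c =
          ∑ k : Fin m → Fin N, ∑ l : Fin m → Fin N,
            if k s0 = c ∧ l s0 = c then
              D k l * ((if a = k t ∧ b = l t then (1:ℂ) else 0) *
                ∏ s ∈ (Finset.univ.erase s0).erase t, ρ s (k s) (l s)) else 0 := by
        intro c
        rw [Matrix.diag_apply, qAct_erase D (Ne.symm hs0) ρ' c c]
        refine Finset.sum_congr rfl fun k _ => Finset.sum_congr rfl fun l _ => ?_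
        have e1 : ρ' t (k t) (l t) = (if a = k t ∧ b = l t then (1:ℂ) else 0) := by
          rw [hρ', Function.update_self]
          simp [Matrix.single]
        have e2 : ∏ s ∈ (Finset.univ.erase s0).erase t, ρ' s (k s) (l s) =
            ∏ s ∈ (Finset.univ.erase s0).erase t, ρ s (k s) (l s) :=
          Finset.prod_congr rfl fun s hs => by
            rw [hρ', Function.update_of_ne (Finset.mem_erase.1 hs).1]
        rw [e1, e2]
      rw [Finset.sum_congr rfl fun c _ => this c]
      rw [Finset.sum_comm]
      refine Finset.sum_congr rfl fun k _ => ?_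
      rw [Finset.sum_comm]
      refine Finset.sum_congr rfl fun l _ => ?_
      exact hinner _ _ _
    rw [htr_expand, qAct_erase D hs0 ρ a b, Finset.mul_sum]
    refine Finset.sum_congr rfl fun k _ => ?_
    rw [Finset.mul_sum]
    refine Finset.sum_congr rfl fun l _ => ?_
    have hent : ρ s0 (k s0) (l s0) = (N : ℂ)⁻¹ * (if k s0 = l s0 then 1 else 0) := by
      rw [hρs0]
      simp [Matrix.smul_apply, Matrix.one_apply]
    have hset : (Finset.univ.erase t).erase s0 = (Finset.univ.erase s0).erase t :=
      Finset.erase_right_comm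
    rw [hent, hset]
    by_cases h1 : k t = a ∧ l t = b <;> by_cases h2 : k s0 = l s0
    · rw [if_pos h1, if_pos h2, if_pos h2, if_pos ⟨h1.1.symm, h1.2.symm⟩]
      ring
    · rw [if_pos h1, if_neg h2, if_neg h2]
      ring
    · rw [if_neg h1, if_pos h2, if_neg (fun h => h1 ⟨h.1.symm, h.2.symm⟩)]
      ring
    · rw [if_neg h1, if_neg h2]
      ring
  rw [hstep_b, hstep_a]
  simp [Matrix.smul_apply, Matrix.one_apply]

lemma psd_eq_conjTranspose_mul_self {ρ : Matrix (Fin N) (Fin N) ℂ} (h : ρ.PosSemidef) :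
    ∃ B : Matrix (Fin N) (Fin N) ℂ, ρ = Bᴴ * B := by
  open scoped MatrixOrder in
  obtain ⟨B, hB⟩ := CStarAlgebra.nonneg_iff_eq_star_mul_self.mp h.nonneg
  exact ⟨B, hB⟩

lemma qAct_isHermitian {D : Matrix (Fin m → Fin N) (Fin m → Fin N) ℂ}
    (hDh : D.IsHermitian) (t : Fin m) (ρ : Fin m → Matrix (Fin N) (Fin N) ℂ)
    (hρ : ∀ s, s ≠ t → (ρ s).IsHermitian) : (qAct D t ρ).IsHermitian := by
  ext a b
  rw [Matrix.conjTranspose_apply, qAct_apply, qAct_apply, star_sum]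
  have hterm : ∀ k l : Fin m → Fin N,
      star (if k t = b ∧ l t = a then
          D k l * ∏ s ∈ Finset.univ.erase t, ρ s (k s) (l s) else 0)
      = (if k t = b ∧ l t = a then
          D l k * ∏ s ∈ Finset.univ.erase t, ρ s (l s) (k s) else 0) := by
    intro k l
    by_cases h : k t = b ∧ l t = a
    · rw [if_pos h, if_pos h, star_mul']
      have hD' : star (D k l) = D l k := by
        have := congrFun (congrFun hDh l) k
        rwa [Matrix.conjTranspose_apply] at this
      rw [star_prod, hD']
      congr 1
      refine Finset.prod_congr rfl fun s hs => ?_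
      have hH := hρ s (Finset.mem_erase.1 hs).1
      have := congrFun (congrFun hH (l s)) (k s)
      rwa [Matrix.conjTranspose_apply] at this
    · rw [if_neg h, if_neg h, star_zero]
  calc ∑ k : Fin m → Fin N, star (∑ l : Fin m → Fin N,
        if k t = b ∧ l t = a then
          D k l * ∏ s ∈ Finset.univ.erase t, ρ s (k s) (l s) else 0)
      = ∑ k : Fin m → Fin N, ∑ l : Fin m → Fin N,
        (if k t = b ∧ l t = a then
          D l k * ∏ s ∈ Finset.univ.erase t, ρ s (l s) (k s) else 0) := by
        refine Finset.sum_congr rfl fun k _ => ?_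
        rw [star_sum]
        exact Finset.sum_congr rfl fun l _ => hterm k l
    _ = ∑ l : Fin m → Fin N, ∑ k : Fin m → Fin N,
        (if k t = b ∧ l t = a then
          D l k * ∏ s ∈ Finset.univ.erase t, ρ s (l s) (k s) else 0) := Finset.sum_comm
    _ = ∑ k : Fin m → Fin N, ∑ l : Fin m → Fin N,
        (if k t = a ∧ l t = b then
          D k l * ∏ s ∈ Finset.univ.erase t, ρ s (k s) (l s) else 0) := by
        refine Finset.sum_congr rfl fun l _ => Finset.sum_congr rfl fun k _ => ?_
        exact if_congr and_comm rfl rfl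

lemma sum_swap4 {α β : Type*} [Fintype α] [Fintype β] (f : α → α → β → β → ℂ) :
    ∑ a, ∑ b, ∑ k, ∑ l, f a b k l = ∑ k, ∑ l, ∑ a, ∑ b, f a b k l :=
  calc ∑ a, ∑ b, ∑ k, ∑ l, f a b k l
      = ∑ a, ∑ k, ∑ b, ∑ l, f a b k l :=
        Finset.sum_congr rfl fun a _ => Finset.sum_comm
    _ = ∑ k, ∑ a, ∑ b, ∑ l, f a b k l := Finset.sum_comm
    _ = ∑ k, ∑ a, ∑ l, ∑ b, f a b k l :=
        Finset.sum_congr rfl fun k _ => Finset.sum_congr rfl fun a _ => Finset.sum_comm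
    _ = ∑ k, ∑ l, ∑ a, ∑ b, f a b k l :=
        Finset.sum_congr rfl fun k _ => Finset.sum_comm

lemma qAct_posSemidef (hN : 0 < N) {D : Matrix (Fin m → Fin N) (Fin m → Fin N) ℂ}
    (hDp : D.PosSemidef) (t : Fin m) (ρ : Fin m → Matrix (Fin N) (Fin N) ℂ)
    (hρ : ∀ s, s ≠ t → (ρ s).PosSemidef) : (qAct D t ρ).PosSemidef := by
  classical
  have hBex : ∀ s : Fin m, ∃ B : Matrix (Fin N) (Fin N) ℂ, s ≠ t → ρ s = Bᴴ * B := by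
    intro s
    by_cases hs : s ≠ t
    · obtain ⟨B, hB⟩ := psd_eq_conjTranspose_mul_self (hρ s hs)
      exact ⟨B, fun _ => hB⟩
    · exact ⟨0, fun h => absurd h hs⟩
  choose B hB using hBex
  have hent : ∀ s, s ≠ t → ∀ u v, ρ s u v = ∑ c, star (B s c u) * B s c v := by
    intro s hs u v
    rw [hB s hs, Matrix.mul_apply]
    exact Finset.sum_congr rfl fun c _ => by rw [Matrix.conjTranspose_apply]
  refine Matrix.PosSemidef.of_dotProduct_mulVec_nonneg ?_ ?_
  · exact qAct_isHermitian hDp.1 t ρ (fun s hs => (hρ s hs).1)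
  · intro x
    set y : (Fin m → Fin N) → (Fin m → Fin N) → ℂ := fun γ k =>
      x (k t) * ∏ s ∈ Finset.univ.erase t, B s (γ s) (k s) with hy
    have hQ : star x ⬝ᵥ (qAct D t ρ) *ᵥ x =
        ∑ k : Fin m → Fin N, ∑ l : Fin m → Fin N,
          (star (x (k t)) * x (l t)) *
            (D k l * ∏ s ∈ Finset.univ.erase t, ρ s (k s) (l s)) := by
      rw [dotProduct]
      calc ∑ a : Fin N, star x a * ((qAct D t ρ) *ᵥ x) a
          = ∑ a : Fin N, ∑ b : Fin N, star (x a) * (qAct D t ρ a b * x b) := by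
            refine Finset.sum_congr rfl fun a _ => ?_
            rw [show ((qAct D t ρ) *ᵥ x) a = ∑ b, qAct D t ρ a b * x b from rfl,
              Finset.mul_sum]
            rfl
        _ = ∑ a : Fin N, ∑ b : Fin N, ∑ k : Fin m → Fin N, ∑ l : Fin m → Fin N,
            (if k t = a ∧ l t = b then
              star (x a) * x b * (D k l * ∏ s ∈ Finset.univ.erase t, ρ s (k s) (l s))
              else 0) := by
            refine Finset.sum_congr rfl fun a _ => Finset.sum_congr rfl fun b _ => ?_
            rw [qAct_apply, Finset.sum_mul, Finset.mul_sum]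
            refine Finset.sum_congr rfl fun k _ => ?_
            rw [Finset.sum_mul, Finset.mul_sum]
            refine Finset.sum_congr rfl fun l _ => ?_
            split_ifs with h
            · ring
            · ring
        _ = ∑ k : Fin m → Fin N, ∑ l : Fin m → Fin N, ∑ a : Fin N, ∑ b : Fin N,
            (if k t = a ∧ l t = b then
              star (x a) * x b * (D k l * ∏ s ∈ Finset.univ.erase t, ρ s (k s) (l s))
              else 0) := by
            exact sum_swap4 (fun a b k l =>
              if k t = a ∧ l t = b then
                star (x a) * x b * (D k l * ∏ s ∈ Finset.univ.erase t, ρ s (k s) (l s))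
              else 0)
        _ = ∑ k : Fin m → Fin N, ∑ l : Fin m → Fin N,
            (star (x (k t)) * x (l t)) *
              (D k l * ∏ s ∈ Finset.univ.erase t, ρ s (k s) (l s)) := by
            refine Finset.sum_congr rfl fun k _ => Finset.sum_congr rfl fun l _ => ?_
            rw [Finset.sum_eq_single (k t)]
            · rw [Finset.sum_eq_single (l t)]
              · rw [if_pos ⟨rfl, rfl⟩]
              · intro b _ hb
                rw [if_neg (fun h => hb h.2.symm)]
              · intro h; exact absurd (Finset.mem_univ _) h
            · intro a _ ha
              refine Finset.sum_eq_zero fun b _ => ?_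
              rw [if_neg (fun h => ha h.1.symm)]
            · intro h; exact absurd (Finset.mem_univ _) h
    have gamma_sum : ∀ F : Fin m → Fin N → ℂ,
        ∑ γ : Fin m → Fin N, ∏ s ∈ Finset.univ.erase t, F s (γ s) =
          (N : ℂ) * ∏ s ∈ Finset.univ.erase t, ∑ c, F s c := by
      intro F
      set G : Fin m → Fin N → ℂ := fun s c => if s = t then 1 else F s c with hG
      have h1 : ∀ γ : Fin m → Fin N, ∏ s ∈ Finset.univ.erase t, F s (γ s) =
          ∏ s, G s (γ s) := by
        intro γ
        rw [← Finset.mul_prod_erase Finset.univ (fun s => G s (γ s)) (Finset.mem_univ t)]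
        have hGt : G t (γ t) = 1 := by rw [hG]; simp
        rw [hGt, one_mul]
        exact Finset.prod_congr rfl fun s hs => by
          rw [hG]; simp [(Finset.mem_erase.1 hs).1]
      rw [Finset.sum_congr rfl fun γ _ => h1 γ]
      have h2 : ∑ γ : Fin m → Fin N, ∏ s, G s (γ s) = ∏ s, ∑ c, G s c := by
        rw [Finset.prod_univ_sum (fun _ => Finset.univ) G]
        rw [← Fintype.piFinset_univ]
      rw [h2, ← Finset.mul_prod_erase Finset.univ (fun s => ∑ c, G s c) (Finset.mem_univ t)]
      congr 1
      · rw [hG]; simp [Finset.card_univ]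
      · exact Finset.prod_congr rfl fun s hs => Finset.sum_congr rfl fun c _ => by
          rw [hG]; simp [(Finset.mem_erase.1 hs).1]
    have hNQ : (N : ℂ) * (star x ⬝ᵥ (qAct D t ρ) *ᵥ x) =
        ∑ γ : Fin m → Fin N, star (y γ) ⬝ᵥ D *ᵥ (y γ) := by
      have hrhs : ∀ γ, star (y γ) ⬝ᵥ D *ᵥ (y γ) =
          ∑ k : Fin m → Fin N, ∑ l : Fin m → Fin N, star (y γ k) * (D k l * y γ l) := by
        intro γ
        rw [dotProduct]
        refine Finset.sum_congr rfl fun k _ => ?_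
        rw [Pi.star_apply, Matrix.mulVec, dotProduct, Finset.mul_sum]
      rw [Finset.sum_congr rfl fun γ _ => hrhs γ, Finset.sum_comm]
      rw [hQ, Finset.mul_sum]
      refine Finset.sum_congr rfl fun k _ => ?_
      rw [Finset.mul_sum, Finset.sum_comm]
      refine Finset.sum_congr rfl fun l _ => ?_
      have hterm : ∀ γ, star (y γ k) * (D k l * y γ l) =
          (star (x (k t)) * x (l t) * D k l) *
            ∏ s ∈ Finset.univ.erase t, (star (B s (γ s) (k s)) * B s (γ s) (l s)) := by
        intro γ
        rw [hy]
        simp only [star_mul', star_prod]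
        rw [Finset.prod_mul_distrib]
        ring
      rw [Finset.sum_congr rfl fun γ _ => hterm γ, ← Finset.mul_sum,
        gamma_sum (fun s c => star (B s c (k s)) * B s c (l s))]
      have hback : ∏ s ∈ Finset.univ.erase t, (∑ c, star (B s c (k s)) * B s c (l s)) =
          ∏ s ∈ Finset.univ.erase t, ρ s (k s) (l s) :=
        Finset.prod_congr rfl fun s hs => (hent s (Finset.mem_erase.1 hs).1 _ _).symm
      rw [hback]
      ring
    have hsum_nonneg : (0:ℂ) ≤ ∑ γ : Fin m → Fin N, star (y γ) ⬝ᵥ D *ᵥ (y γ) :=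
      Finset.sum_nonneg fun γ _ => hDp.dotProduct_mulVec_nonneg (y γ)
    have hinv_nonneg : (0:ℂ) ≤ (N:ℂ)⁻¹ := by
      have h0 : Complex.ofReal ((N:ℝ)⁻¹) = (N:ℂ)⁻¹ := by
        rw [Complex.ofReal_inv, Complex.ofReal_natCast]
      rw [← h0]
      exact Complex.zero_le_real.2 (inv_nonneg.2 (Nat.cast_nonneg N))
    have hNne : (N:ℂ) ≠ 0 := Nat.cast_ne_zero.2 hN.ne'
    calc (0:ℂ) ≤ (N:ℂ)⁻¹ * ((N:ℂ) * (star x ⬝ᵥ (qAct D t ρ) *ᵥ x)) := by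
          rw [hNQ]
          exact mul_nonneg hinv_nonneg hsum_nonneg
      _ = star x ⬝ᵥ (qAct D t ρ) *ᵥ x := by
          rw [← mul_assoc, inv_mul_cancel₀ hNne, one_mul]

lemma density_entry_bound {τ : Matrix (Fin N) (Fin N) ℂ} (hτ : IsDensity τ) (a b : Fin N) :
    ‖τ a b‖ ≤ 1 := by
  obtain ⟨B, hB⟩ := psd_eq_conjTranspose_mul_self hτ.1
  set r : Fin N → ℝ := fun a => ∑ c, Complex.normSq (B c a) with hr
  have hent : ∀ u v, τ u v = ∑ c, star (B c u) * B c v := by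
    intro u v
    rw [hB, Matrix.mul_apply]
    exact Finset.sum_congr rfl fun c _ => by rw [Matrix.conjTranspose_apply]
  have hdiag : ∀ u, τ u u = (r u : ℂ) := by
    intro u
    rw [hent, hr]
    push_cast
    exact Finset.sum_congr rfl fun c _ => by
      rw [Complex.normSq_eq_conj_mul_self]; rfl
  have hrsum : ∑ u, r u = 1 := by
    have h1 : τ.trace = ∑ u, (r u : ℂ) := Finset.sum_congr rfl fun u _ => hdiag u
    have h2 : ((∑ u, r u : ℝ) : ℂ) = 1 := by
      push_cast
      rw [← h1, hτ.2]
    exact_mod_cast h2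
  have hrle : ∀ u, r u ≤ 1 := by
    intro u
    rw [← hrsum]
    exact Finset.single_le_sum (f := r)
      (fun v _ => Finset.sum_nonneg fun c _ => Complex.normSq_nonneg _) (Finset.mem_univ u)
  have habs : ‖τ a b‖ ≤ (r a + r b) / 2 := by
    rw [hent]
    refine le_trans (norm_sum_le _ _) ?_
    have hterm : ∀ c, ‖star (B c a) * B c b‖ ≤
        (Complex.normSq (B c a) + Complex.normSq (B c b)) / 2 := by
      intro c
      rw [norm_mul, norm_star]
      have h2 : 2 * ‖B c a‖ * ‖B c b‖ ≤ ‖B c a‖^2 + ‖B c b‖^2 := two_mul_le_add_sq _ _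
      have hsq : ∀ z : ℂ, ‖z‖^2 = Complex.normSq z := fun z => by
        rw [← Complex.sq_norm]
      nlinarith [hsq (B c a), hsq (B c b)]
    refine le_trans (Finset.sum_le_sum fun c _ => hterm c) ?_
    rw [hr]
    rw [← Finset.sum_div, ← Finset.sum_add_distrib]
  linarith [hrle a, hrle b, habs]

lemma posSemidef_real_smul {M : Matrix (Fin N) (Fin N) ℂ} (hM : M.PosSemidef) {c : ℝ}
    (hc : 0 ≤ c) : ((c : ℂ) • M).PosSemidef := by
  refine Matrix.PosSemidef.of_dotProduct_mulVec_nonneg ?_ ?_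
  · ext a b
    rw [Matrix.conjTranspose_apply, Matrix.smul_apply, Matrix.smul_apply, star_smul]
    have h1 : star (c : ℂ) = (c : ℂ) := by
      rw [Complex.star_def, Complex.conj_ofReal]
    rw [h1]
    congr 1
    have := congrFun (congrFun hM.1 a) b
    rwa [Matrix.conjTranspose_apply] at this
  · intro x
    have h1 : star x ⬝ᵥ ((c : ℂ) • M) *ᵥ x = (c : ℂ) * (star x ⬝ᵥ M *ᵥ x) := by
      rw [Matrix.smul_mulVec, dotProduct_smul]
      rfl
    rw [h1]
    exact mul_nonneg (Complex.zero_le_real.2 hc) (hM.dotProduct_mulVec_nonneg x)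

lemma trace_conjTranspose_mul_re (A : Matrix (Fin N) (Fin N) ℂ) :
    (Aᴴ * A).trace.re = ∑ a, ∑ b, Complex.normSq (A b a) := by
  have h1 : (Aᴴ * A).trace = ∑ a, ∑ b, (Complex.normSq (A b a) : ℂ) := by
    rw [Matrix.trace]
    refine Finset.sum_congr rfl fun a _ => ?_
    rw [Matrix.diag_apply, Matrix.mul_apply]
    refine Finset.sum_congr rfl fun b _ => ?_
    rw [Matrix.conjTranspose_apply, Complex.normSq_eq_conj_mul_self]
    rfl
  rw [h1]
  rw [Complex.re_sum]
  refine Finset.sum_congr rfl fun a _ => ?_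
  rw [Complex.re_sum]
  refine Finset.sum_congr rfl fun b _ => ?_
  rw [Complex.ofReal_re]


theorem qAct_iterates_tendsto_maximally_mixed {N m : ℕ} (hm : 3 ≤ m)
    (D : Matrix (Fin m → Fin N) (Fin m → Fin N) ℂ) (hD : QMStochastic D)
    (α : ℝ) (hα : α ∈ Set.Ioc (0 : ℝ) 1)
    (ρ0 : Matrix (Fin N) (Fin N) ℂ) (hρ0 : IsDensity ρ0)
    (σ : ℕ → Matrix (Fin N) (Fin N) ℂ)
    (hσ0 : σ 0 = (α : ℂ) • ((N : ℂ)⁻¹ • (1 : Matrix (Fin N) (Fin N) ℂ)) +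
      ((1 - α : ℝ) : ℂ) • ρ0)
    (hrec : ∀ n, σ (n + 1) = qAct D ⟨0, by omega⟩ fun _ => σ n) :
    Filter.Tendsto
      (fun n => Real.sqrt
        (((σ n - (N : ℂ)⁻¹ • (1 : Matrix (Fin N) (Fin N) ℂ))ᴴ *
          (σ n - (N : ℂ)⁻¹ • (1 : Matrix (Fin N) (Fin N) ℂ))).trace.re))
      Filter.atTop (nhds 0) := by
  classical
  obtain ⟨hα0, hα1⟩ := hα
  rcases Nat.eq_zero_or_pos N with hN0 | hN
  · exfalso
    have h1 := hρ0.2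
    subst hN0
    rw [Matrix.trace] at h1
    simp at h1
  set P : Matrix (Fin N) (Fin N) ℂ := (N : ℂ)⁻¹ • 1 with hP
  set t : Fin m := ⟨0, by omega⟩ with ht
  set s1 : Fin m := ⟨1, by omega⟩ with hs1
  set s2 : Fin m := ⟨2, by omega⟩ with hs2
  have hs1t : s1 ≠ t := by rw [hs1, ht]; simp [Fin.ext_iff]
  have hs2t : s2 ≠ t := by rw [hs2, ht]; simp [Fin.ext_iff]
  have hs21 : s2 ≠ s1 := by rw [hs2, hs1]; simp [Fin.ext_iff]
  have hNne : (N : ℂ) ≠ 0 := Nat.cast_ne_zero.2 hN.ne'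
  have hPtrace : P.trace = 1 := by
    rw [hP, Matrix.trace_smul, Matrix.trace_one, smul_eq_mul]
    simp only [Fintype.card_fin]
    exact inv_mul_cancel₀ hNne
  have hPpsd : P.PosSemidef := by
    have h1 : (1 : Matrix (Fin N) (Fin N) ℂ).PosSemidef := Matrix.PosSemidef.one
    have h2 := posSemidef_real_smul h1 (c := (N:ℝ)⁻¹) (inv_nonneg.2 (Nat.cast_nonneg N))
    have h0 : Complex.ofReal ((N:ℝ)⁻¹) = (N:ℂ)⁻¹ := by
      rw [Complex.ofReal_inv, Complex.ofReal_natCast]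
    rwa [h0] at h2
  have key : ∀ n, ∃ γ : ℝ, 0 ≤ γ ∧ γ ≤ (1-α)^(2^n) ∧ ∃ τ, IsDensity τ ∧
      σ n = ((1-γ : ℝ) : ℂ) • P + ((γ : ℝ) : ℂ) • τ := by
    intro n
    induction n with
    | zero =>
      refine ⟨1-α, by linarith, by norm_num, ρ0, hρ0, ?_⟩
      rw [hσ0]
      have hc : ((1-(1-α) : ℝ) : ℂ) = (α : ℂ) := by push_cast; ring
      rw [hc]
    | succ n ih =>
      obtain ⟨γ, hγ0, hγle, τ, hτd, hdec⟩ := ih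
      have h1a : (0:ℝ) ≤ 1 - α := by linarith
      have h1b : (1:ℝ) - α ≤ 1 := by linarith
      have hγ1 : γ ≤ 1 := le_trans hγle (pow_le_one₀ h1a h1b)
      have hσtr : (σ n).trace = 1 := by
        rw [hdec, Matrix.trace_add]
        have e1 : (((1-γ:ℝ):ℂ) • P).trace = ((1-γ:ℝ):ℂ) := by
          rw [Matrix.trace_smul, hPtrace, smul_eq_mul, mul_one]
        have e2 : (((γ:ℝ):ℂ) • τ).trace = ((γ:ℝ):ℂ) := by
          rw [Matrix.trace_smul, hτd.2, smul_eq_mul, mul_one]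
        rw [e1, e2]
        push_cast
        ring
      have hσpsd : (σ n).PosSemidef := by
        rw [hdec]
        exact (posSemidef_real_smul hPpsd (by linarith)).add (posSemidef_real_smul hτd.1 hγ0)
      set ρc : Fin m → Matrix (Fin N) (Fin N) ℂ := fun _ => σ n with hρc
      have hupdate1 : ρc = Function.update ρc s1 (((1-γ:ℝ):ℂ) • P + ((γ:ℝ):ℂ) • τ) := by
        rw [← hdec]
        exact (Function.update_eq_self s1 ρc).symm
      have hstep1 : qAct D t ρc = ((1-γ:ℝ):ℂ) • qAct D t (Function.update ρc s1 P) +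
          ((γ:ℝ):ℂ) • qAct D t (Function.update ρc s1 τ) := by
        conv_lhs => rw [hupdate1]
        rw [qAct_update_add D hs1t, qAct_update_smul D hs1t ρc (((1-γ:ℝ)):ℂ) P,
          qAct_update_smul D hs1t ρc (((γ:ℝ)):ℂ) τ]
      have hfirst : qAct D t (Function.update ρc s1 P) = P := by
        refine qAct_unit_slot hN hD hs1t _ (Function.update_self _ _ _) ?_
        intro s hst hss1
        rw [Function.update_of_ne hss1]
        exact hσtr
      set ρ2 : Fin m → Matrix (Fin N) (Fin N) ℂ := Function.update ρc s1 τ with hρ2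
      have hρ2s2 : ρ2 s2 = σ n := by rw [hρ2, Function.update_of_ne hs21]
      have hupdate2 : ρ2 = Function.update ρ2 s2 (((1-γ:ℝ):ℂ) • P + ((γ:ℝ):ℂ) • τ) := by
        rw [← hdec, ← hρ2s2]
        exact (Function.update_eq_self s2 ρ2).symm
      have hstep2 : qAct D t ρ2 = ((1-γ:ℝ):ℂ) • qAct D t (Function.update ρ2 s2 P) +
          ((γ:ℝ):ℂ) • qAct D t (Function.update ρ2 s2 τ) := by
        conv_lhs => rw [hupdate2]
        rw [qAct_update_add D hs2t, qAct_update_smul D hs2t ρ2 (((1-γ:ℝ)):ℂ) P,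
          qAct_update_smul D hs2t ρ2 (((γ:ℝ)):ℂ) τ]
      have hsecond : qAct D t (Function.update ρ2 s2 P) = P := by
        refine qAct_unit_slot hN hD hs2t _ (Function.update_self _ _ _) ?_
        intro s hst hss2
        rw [Function.update_of_ne hss2]
        by_cases hss1 : s = s1
        · subst hss1; rw [hρ2, Function.update_self]; exact hτd.2
        · rw [hρ2, Function.update_of_ne hss1]; exact hσtr
      set τ' := qAct D t (Function.update ρ2 s2 τ) with hτ'
      have hτ'd : IsDensity τ' := by
        constructor
        · refine qAct_posSemidef hN hD.1 t _ ?_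
          intro s hst
          by_cases hss2 : s = s2
          · subst hss2; rw [Function.update_self]; exact hτd.1
          · rw [Function.update_of_ne hss2]
            by_cases hss1 : s = s1
            · subst hss1; rw [hρ2, Function.update_self]; exact hτd.1
            · rw [hρ2, Function.update_of_ne hss1]; exact hσpsd
        · rw [hτ', trace_qAct hN hD]
          refine Finset.prod_eq_one fun s hs => ?_
          by_cases hss2 : s = s2
          · subst hss2; rw [Function.update_self]; exact hτd.2
          · rw [Function.update_of_ne hss2]
            by_cases hss1 : s = s1
            · subst hss1; rw [hρ2, Function.update_self]; exact hτd.2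
            · rw [hρ2, Function.update_of_ne hss1]; exact hσtr
      refine ⟨γ^2, sq_nonneg γ, ?_, τ', hτ'd, ?_⟩
      · have h2 : (1-α)^(2^(n+1)) = ((1-α)^(2^n))^2 := by
          rw [pow_succ, pow_mul]
        rw [h2]
        exact pow_le_pow_left₀ hγ0 hγle 2
      · rw [hrec n]
        show qAct D t ρc = _
        rw [hstep1, hfirst, hstep2, hsecond]
        have hc1 : ((1-γ^2:ℝ):ℂ) = ((1-γ:ℝ):ℂ) + ((γ:ℝ):ℂ) * ((1-γ:ℝ):ℂ) := by
          push_cast; ring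
        have hc2 : ((γ^2:ℝ):ℂ) = ((γ:ℝ):ℂ) * ((γ:ℝ):ℂ) := by push_cast; ring
        rw [hc1, hc2]
        module
  choose γf hγ0 hγle τf hτd hdec using key
  have hbound : ∀ n, Real.sqrt (((σ n - P)ᴴ * (σ n - P)).trace.re) ≤
      2*(N:ℝ)*((1-α)^(2^n)) := by
    intro n
    have hA : σ n - P = ((γf n : ℝ) : ℂ) • (τf n - P) := by
      rw [hdec n]
      have hc : ((1 - γf n : ℝ) : ℂ) = 1 - ((γf n : ℝ) : ℂ) := by push_cast; ring
      rw [hc]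
      module
    have hentb : ∀ a b : Fin N, Complex.normSq ((σ n - P) b a) ≤ (γf n)^2 * 4 := by
      intro a b
      rw [hA, Matrix.smul_apply, smul_eq_mul, Complex.normSq_mul, Complex.normSq_ofReal]
      have h2 : ‖(τf n - P) b a‖ ≤ 2 := by
        rw [Matrix.sub_apply]
        refine le_trans (norm_sub_le _ _) ?_
        have hx1 : ‖τf n b a‖ ≤ 1 := density_entry_bound (hτd n) b a
        have hx2 : ‖P b a‖ ≤ 1 := by
          rw [hP, Matrix.smul_apply, Matrix.one_apply, smul_eq_mul, norm_mul]
          have hn1 : ‖(N:ℂ)⁻¹‖ ≤ 1 := by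
            rw [norm_inv, Complex.norm_natCast]
            exact inv_le_one_of_one_le₀ (by exact_mod_cast hN)
          have hn2 : ‖(if b = a then (1:ℂ) else 0)‖ ≤ 1 := by
            split_ifs <;> simp
          calc ‖(N:ℂ)⁻¹‖ * ‖(if b = a then (1:ℂ) else 0)‖ ≤ 1 * 1 :=
                mul_le_mul hn1 hn2 (norm_nonneg _) zero_le_one
            _ = 1 := one_mul 1
        linarith
      have h3 : Complex.normSq ((τf n - P) b a) ≤ 4 := by
        have hh := Complex.sq_norm ((τf n - P) b a)
        nlinarith [norm_nonneg ((τf n - P) b a)]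
      have h4 : Complex.normSq ((γf n : ℂ)) = (γf n)^2 := by
        rw [Complex.normSq_ofReal]; ring
      nlinarith [Complex.normSq_nonneg ((τf n - P) b a), sq_nonneg (γf n)]
    have htr : ((σ n - P)ᴴ * (σ n - P)).trace.re ≤ (N:ℝ)*(N:ℝ)*((γf n)^2 * 4) := by
      rw [trace_conjTranspose_mul_re]
      calc ∑ a, ∑ b, Complex.normSq ((σ n - P) b a)
          ≤ ∑ _a : Fin N, ∑ _b : Fin N, (γf n)^2 * 4 :=
            Finset.sum_le_sum fun a _ => Finset.sum_le_sum fun b _ => hentb a b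
        _ = (N:ℝ)*(N:ℝ)*((γf n)^2 * 4) := by
            simp [Finset.sum_const, Finset.card_univ]
            ring
    have hs1' : Real.sqrt (((σ n - P)ᴴ * (σ n - P)).trace.re) ≤ 2*(N:ℝ)*(γf n) := by
      have heq : (2*(N:ℝ)*(γf n))^2 = (N:ℝ)*(N:ℝ)*((γf n)^2 * 4) := by ring
      have h5 : ((σ n - P)ᴴ * (σ n - P)).trace.re ≤ (2*(N:ℝ)*(γf n))^2 := by
        rw [heq]; exact htr
      calc Real.sqrt (((σ n - P)ᴴ * (σ n - P)).trace.re)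
          ≤ Real.sqrt ((2*(N:ℝ)*(γf n))^2) := Real.sqrt_le_sqrt h5
        _ = 2*(N:ℝ)*(γf n) := Real.sqrt_sq (by have := hγ0 n; positivity)
    refine le_trans hs1' ?_
    have h2N : (0:ℝ) ≤ 2*(N:ℝ) := by positivity
    exact mul_le_mul_of_nonneg_left (hγle n) h2N
  have h1a : (0:ℝ) ≤ 1 - α := by linarith
  have h1b : (1:ℝ) - α < 1 := by linarith
  have hpow : Filter.Tendsto (fun n : ℕ => (1-α)^(2^n)) Filter.atTop (nhds 0) := by
    refine squeeze_zero (fun n => pow_nonneg h1a _) (fun n => ?_)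
      (tendsto_pow_atTop_nhds_zero_of_lt_one h1a h1b)
    exact pow_le_pow_of_le_one h1a (by linarith) (Nat.le_of_lt (Nat.lt_two_pow_self (n := n)))
  have hg : Filter.Tendsto (fun n : ℕ => 2*(N:ℝ)*((1-α)^(2^n))) Filter.atTop (nhds 0) := by
    have := hpow.const_mul (2*(N:ℝ))
    simpa using this
  exact squeeze_zero (fun n => Real.sqrt_nonneg _) hbound hg
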